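/- arXiv:2108.04995 — 7 statements merged into one kernel-verified Lean document; each statement's English description precedes it below -/
import Mathlib

section
/- Let C be a code on n neurons and let U = (U_1, …, U_n) be a realization of C by open subsets of ℝ^d. If a tuple (σ1, σ2, σ3, τ) of subsets of [n] is a wheel of U (i.e., satisfies W(i), W(ii), W(iii)), then U is not a convex realization: it is not the case that every U_i is convex. Consequently, if some tuple is a wheel of every realization of C, then C is non-convex. -/
namespace NeuralCode

/-- `USet U σ` is `U_σ = ⋂ i ∈ σ, U i` (the whole space when `σ = ∅`). -/
def USet {ι : Type*} {d : ℕ} (U : ι → Set (EuclideanSpace ℝ (Fin d))) (σ : Finset ι) :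
    Set (EuclideanSpace ℝ (Fin d)) :=
  ⋂ i ∈ σ, U i

/-- The atom of the codeword `c` in the family `U`. -/
def codeAtom {ι : Type*} {d : ℕ} (U : ι → Set (EuclideanSpace ℝ (Fin d))) (c : Finset ι) :
    Set (EuclideanSpace ℝ (Fin d)) :=
  USet U c \ ⋃ j ∉ c, U j

/-- The family `U` (of open sets) is a realization of the code `C`. -/
def IsRealization {ι : Type*} {d : ℕ} (C : Set (Finset ι))
    (U : ι → Set (EuclideanSpace ℝ (Fin d))) : Prop :=
  (∀ i, IsOpen (U i)) ∧ ∀ c : Finset ι, c ∈ C ↔ (codeAtom U c).Nonempty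

/-- The code `C` is convex: for some dimension `d` it admits a realization in `ℝ^d`
by convex open sets. -/
def IsConvexCode {ι : Type*} (C : Set (Finset ι)) : Prop :=
  ∃ (d : ℕ) (U : ι → Set (EuclideanSpace ℝ (Fin d))),
    IsRealization C U ∧ ∀ i, Convex ℝ (U i)

/-- The trunk of `σ` in `C`: the set of codewords containing `σ`. -/
def trunk {ι : Type*} (C : Set (Finset ι)) (σ : Finset ι) : Set (Finset ι) :=
  {c | c ∈ C ∧ σ ⊆ c}

/-- The neural complex `Δ(C)` of `C`. -/
def neuralComplex {ι : Type*} (C : Set (Finset ι)) : Set (Finset ι) :=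
  {σ | ∃ c ∈ C, σ ⊆ c}

/-- Condition W(i). -/
def WheelWi {ι : Type*} {d : ℕ} (U : ι → Set (EuclideanSpace ℝ (Fin d)))
    (σ1 σ2 σ3 : Finset ι) : Prop :=
  USet U σ1 ∩ USet U σ2 = USet U σ1 ∩ USet U σ2 ∩ USet U σ3 ∧
    USet U σ1 ∩ USet U σ3 = USet U σ1 ∩ USet U σ2 ∩ USet U σ3 ∧
    USet U σ2 ∩ USet U σ3 = USet U σ1 ∩ USet U σ2 ∩ USet U σ3 ∧
    (USet U σ1 ∩ USet U σ2 ∩ USet U σ3).Nonempty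

/-- Condition W(ii). -/
def WheelWii {ι : Type*} {d : ℕ} (U : ι → Set (EuclideanSpace ℝ (Fin d)))
    (σ1 σ2 σ3 τ : Finset ι) : Prop :=
  USet U σ1 ∩ USet U σ2 ∩ USet U σ3 ∩ USet U τ = ∅

/-- Condition W(iii). -/
def WheelWiii {ι : Type*} {d : ℕ} (U : ι → Set (EuclideanSpace ℝ (Fin d)))
    (σ1 σ2 σ3 τ : Finset ι) : Prop :=
  (Convex ℝ (USet U τ) ∧ Convex ℝ (USet U σ1 ∩ USet U τ) ∧
      Convex ℝ (USet U σ2 ∩ USet U τ) ∧ Convex ℝ (USet U σ3 ∩ USet U τ)) →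
    ∃ x ∈ USet U σ1 ∩ USet U τ, ∃ y ∈ USet U σ3 ∩ USet U τ,
      (segment ℝ x y ∩ (USet U σ2 ∩ USet U τ)).Nonempty

/-- Condition W(iii)◦. -/
def WheelWiiiCirc {ι : Type*} {d : ℕ} (U : ι → Set (EuclideanSpace ℝ (Fin d)))
    (σ1 σ2 σ3 τ : Finset ι) : Prop :=
  (USet U σ1 ∩ USet U τ).Nonempty ∧ (USet U σ2 ∩ USet U τ).Nonempty ∧
    (USet U σ3 ∩ USet U τ).Nonempty

/-- `(σ1, σ2, σ3, τ)` is a wheel of the realization `U`. -/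
def IsWheelOfRealization {ι : Type*} {d : ℕ} (U : ι → Set (EuclideanSpace ℝ (Fin d)))
    (σ1 σ2 σ3 τ : Finset ι) : Prop :=
  WheelWi U σ1 σ2 σ3 ∧ WheelWii U σ1 σ2 σ3 τ ∧ WheelWiii U σ1 σ2 σ3 τ

/-- Condition P(i). -/
def CondPi {ι : Type*} [DecidableEq ι] (C : Set (Finset ι)) (σ1 σ2 σ3 : Finset ι) : Prop :=
  σ1 ∪ σ2 ∪ σ3 ∈ neuralComplex C ∧
    trunk C (σ1 ∪ σ2) = trunk C (σ1 ∪ σ2 ∪ σ3) ∧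
    trunk C (σ1 ∪ σ3) = trunk C (σ1 ∪ σ2 ∪ σ3) ∧
    trunk C (σ2 ∪ σ3) = trunk C (σ1 ∪ σ2 ∪ σ3)

/-- Condition P(ii). -/
def CondPii {ι : Type*} [DecidableEq ι] (C : Set (Finset ι)) (σ1 σ2 σ3 τ : Finset ι) : Prop :=
  σ1 ∪ σ2 ∪ σ3 ∪ τ ∉ neuralComplex C

/-- Condition P(iii)◦. -/
def CondPiiiCirc {ι : Type*} [DecidableEq ι] (C : Set (Finset ι)) (σ1 σ2 σ3 τ : Finset ι) :
    Prop :=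
  σ1 ∪ τ ∈ neuralComplex C ∧ σ2 ∪ τ ∈ neuralComplex C ∧ σ3 ∪ τ ∈ neuralComplex C

/-- `(σ1, σ2, σ3, τ)` is a sprocket of `C`. -/
def IsSprocket {ι : Type*} [DecidableEq ι] (C : Set (Finset ι)) (σ1 σ2 σ3 τ : Finset ι) :
    Prop :=
  σ1 ∈ neuralComplex C ∧ σ2 ∈ neuralComplex C ∧ σ3 ∈ neuralComplex C ∧
    τ ∈ neuralComplex C ∧
    CondPi C σ1 σ2 σ3 ∧ CondPii C σ1 σ2 σ3 τ ∧ CondPiiiCirc C σ1 σ2 σ3 τ ∧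
    ∃ ρ1 ∈ neuralComplex C, ∃ ρ3 ∈ neuralComplex C,
      trunk C (σ1 ∪ τ) ⊆ trunk C ρ1 ∧ trunk C (σ3 ∪ τ) ⊆ trunk C ρ3 ∧
      trunk C τ ⊆ trunk C ρ1 ∪ trunk C ρ3 ∧
      trunk C (ρ1 ∪ ρ3 ∪ τ) ⊆ trunk C σ2

/-- `F` is a facet of `Δ(C)`: an inclusion-maximal codeword of `C`. -/
def IsFacet {ι : Type*} (C : Set (Finset ι)) (F : Finset ι) : Prop :=
  F ∈ C ∧ ∀ c ∈ C, F ⊆ c → c = F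

/-- `τ` is a max-intersection face of `Δ(C)`: a face equal to the intersection of two or
more distinct facets. -/
def IsMaxIntersectionFace {ι : Type*} [DecidableEq ι] [Fintype ι] (C : Set (Finset ι))
    (τ : Finset ι) : Prop :=
  τ ∈ neuralComplex C ∧
    ∃ S : Finset (Finset ι), 2 ≤ S.card ∧ (∀ F ∈ S, IsFacet C F) ∧ τ = S.inf id

/-- The link graph of `τ` in `Δ(C)`. -/
def linkGraph {ι : Type*} [DecidableEq ι] (C : Set (Finset ι)) (τ : Finset ι) :
    SimpleGraph {i : ι // i ∉ τ ∧ insert i τ ∈ neuralComplex C} where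
  Adj a b := a ≠ b ∧ τ ∪ {(a : ι), (b : ι)} ∈ neuralComplex C
  symm := ⟨fun a b h => ⟨h.1.symm, by rw [Finset.pair_comm]; exact h.2⟩⟩
  loopless := ⟨fun a h => h.1 rfl⟩

/-- `(σ1, σ2, σ3, τ)` is a wire wheel of `C`. -/
def IsWireWheel {ι : Type*} [DecidableEq ι] (C : Set (Finset ι)) (σ1 σ2 σ3 τ : Finset ι) :
    Prop :=
  σ1 ∈ neuralComplex C ∧ σ2 ∈ neuralComplex C ∧ σ3 ∈ neuralComplex C ∧
    τ ∈ neuralComplex C ∧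
    CondPi C σ1 σ2 σ3 ∧ CondPii C σ1 σ2 σ3 τ ∧ τ ∉ C ∧
    (∀ ω : Finset ι, ω.card = 3 → Disjoint ω τ → τ ∪ ω ∉ neuralComplex C) ∧
    (linkGraph C τ).IsTree ∧
    ∃ v1 v2 v3 : {i : ι // i ∉ τ ∧ insert i τ ∈ neuralComplex C},
      σ1 \ τ = {(v1 : ι)} ∧ σ2 \ τ = {(v2 : ι)} ∧ σ3 \ τ = {(v3 : ι)} ∧
      ∀ p : (linkGraph C τ).Walk v1 v3, p.IsPath → v2 ∈ p.support

/-- `(σ1, σ3, τ)` is a wheel frame of `C`. -/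
def IsWheelFrame {ι : Type*} [DecidableEq ι] (C : Set (Finset ι)) (σ1 σ3 τ : Finset ι) :
    Prop :=
  σ1 ∈ neuralComplex C ∧ σ3 ∈ neuralComplex C ∧ τ ∈ neuralComplex C ∧
    (σ1 ∪ σ3 ∈ neuralComplex C ∧
      ∀ ω : Finset ι, ω ⊆ σ1 ∪ σ3 → ¬ω ⊆ σ1 → ¬ω ⊆ σ3 → ω ∪ τ ∈ neuralComplex C →
        trunk C (σ1 ∪ ω) = trunk C (σ1 ∪ σ3) ∧ trunk C (σ3 ∪ ω) = trunk C (σ1 ∪ σ3)) ∧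
    τ ∪ σ1 ∪ σ3 ∉ neuralComplex C ∧
    σ1 ∪ τ ∈ neuralComplex C ∧ σ3 ∪ τ ∈ neuralComplex C ∧
    σ1 ∩ σ3 = ∅ ∧
    trunk C τ ⊆ ⋃ i ∈ (σ1 ∪ σ3 : Finset ι), trunk C {i}

/-- A subset of `ℝ^d` is top-dimensional: every nonempty intersection with an open set
has nonempty interior. -/
def TopDimensional {d : ℕ} (S : Set (EuclideanSpace ℝ (Fin d))) : Prop :=
  ∀ O : Set (EuclideanSpace ℝ (Fin d)), IsOpen O → (S ∩ O).Nonempty →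
    (interior (S ∩ O)).Nonempty

/-- A realization is top-dimensional if each of its atoms is empty or top-dimensional. -/
def IsTopDimRealization {ι : Type*} {d : ℕ} (U : ι → Set (EuclideanSpace ℝ (Fin d))) :
    Prop :=
  ∀ c : Finset ι, codeAtom U c = ∅ ∨ TopDimensional (codeAtom U c)

/-- `C` is top-dimensionally convex. -/
def IsTopDimConvexCode {ι : Type*} (C : Set (Finset ι)) : Prop :=
  ∃ (d : ℕ) (U : ι → Set (EuclideanSpace ℝ (Fin d))),
    IsRealization C U ∧ IsTopDimRealization U ∧ ∀ i, Convex ℝ (U i)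

/-- The restriction `C|_χ = {c ∩ χ : c ∈ C}`, as a code on the neuron set `χ`. -/
def restrictCode {ι : Type*} [DecidableEq ι] (C : Set (Finset ι)) (χ : Finset ι) :
    Set (Finset {i : ι // i ∈ χ}) :=
  (fun c => c.subtype (· ∈ χ)) '' C

/-- Neuron `j` is trivial in `C`: no codeword contains it. -/
def TrivialNeuron {ι : Type*} (C : Set (Finset ι)) (j : ι) : Prop :=
  ∀ c ∈ C, j ∉ c

/-- Neuron `j` is redundant in `C`. -/
def RedundantNeuron {ι : Type*} [DecidableEq ι] (C : Set (Finset ι)) (j : ι) : Prop :=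
  ¬TrivialNeuron C j ∧ ∃ σ : Finset ι, j ∉ σ ∧ trunk C {j} = trunk C σ

/-- `C` is decomposable with embedded part supported on `φ`. -/
def IsDecomposable {ι : Type*} [DecidableEq ι] [Fintype ι] (C : Set (Finset ι))
    (φ : Finset ι) : Prop :=
  φ ≠ ∅ ∧ φ ≠ Finset.univ ∧
    ∃ ψ : Finset ι, Disjoint φ ψ ∧ ψ ≠ Finset.univ ∧ ψ ∈ C ∧
      ∀ c ∈ C, (c ∩ φ).Nonempty → ∃ φ' ⊆ φ, c = φ' ∪ ψ

end NeuralCode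

open NeuralCode

private lemma aux_le {d : ℕ} {V V2 P : Set (EuclideanSpace ℝ (Fin d))}
    (cV : Convex ℝ V) (oV2 : IsOpen V2) {w : EuclideanSpace ℝ (Fin d)}
    (hw2 : w ∈ V2) (hwP : w ∈ closure P) (hPV : P ⊆ V) (hVP : V ∩ V2 ⊆ P)
    {f : EuclideanSpace ℝ (Fin d) →L[ℝ] ℝ} (hf : ∀ a ∈ P, f a < f w)
    {v : EuclideanSpace ℝ (Fin d)} (hv : v ∈ V) : f v ≤ f w := by
  by_contra h
  push_neg at h
  obtain ⟨ρ, hρ, hball⟩ := Metric.isOpen_iff.1 oV2 w hw2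
  set st : ℝ := min (1/2) (ρ / (2 * (dist v w + 1))) with hstdef
  have hdvw : (0:ℝ) ≤ dist v w := dist_nonneg
  have hstpos : 0 < st := lt_min (by norm_num) (div_pos hρ (by positivity))
  have hstlt : st < 1 := lt_of_le_of_lt (min_le_left _ _) (by norm_num)
  have hstd : st * dist v w < ρ / 2 := by
    have h1 : st ≤ ρ / (2 * (dist v w + 1)) := min_le_right _ _
    have h2 : st * dist v w ≤ ρ / (2 * (dist v w + 1)) * dist v w :=
      mul_le_mul_of_nonneg_right h1 hdvw
    have h3 : ρ / (2 * (dist v w + 1)) * dist v w < ρ / 2 := by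
      rw [div_mul_eq_mul_div, div_lt_div_iff₀ (by positivity) (by norm_num)]
      nlinarith
    linarith
  set δ : ℝ := st * (f v - f w) / 2 with hδdef
  have hδpos : 0 < δ := by
    have : 0 < f v - f w := by linarith
    positivity
  have hOopen : IsOpen (Metric.ball w (ρ/2) ∩ f ⁻¹' Set.Ioi (f w - δ)) :=
    (Metric.isOpen_ball).inter ((isOpen_Ioi).preimage f.continuous)
  have hwO : w ∈ Metric.ball w (ρ/2) ∩ f ⁻¹' Set.Ioi (f w - δ) :=
    ⟨Metric.mem_ball_self (by linarith), by simp; linarith⟩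
  obtain ⟨w', hw'O, hw'P⟩ := mem_closure_iff.1 hwP _ hOopen hwO
  set m := (1 - st) • w' + st • v with hmdef
  have hmV : m ∈ V := cV (hPV hw'P) hv (by linarith) (le_of_lt hstpos) (by ring)
  have hmw : m - w = (1 - st) • (w' - w) + st • (v - w) := by
    rw [hmdef]; module
  have hnm : dist m w < ρ := by
    rw [dist_eq_norm, hmw]
    have h4 : ‖(1 - st) • (w' - w) + st • (v - w)‖ ≤
        (1 - st) * ‖w' - w‖ + st * ‖v - w‖ := by
      refine le_trans (norm_add_le _ _) ?_
      rw [norm_smul, norm_smul, Real.norm_eq_abs, Real.norm_eq_abs,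
        abs_of_nonneg (by linarith), abs_of_nonneg (le_of_lt hstpos)]
    have h5 : ‖w' - w‖ < ρ/2 := by
      have := hw'O.1
      rwa [Metric.mem_ball, dist_eq_norm] at this
    have h6 : st * ‖v - w‖ < ρ/2 := by
      have : ‖v - w‖ = dist v w := (dist_eq_norm v w).symm
      rw [this]; exact hstd
    nlinarith [norm_nonneg (w' - w)]
  have hm2 : m ∈ V2 := hball (Metric.mem_ball.2 hnm)
  have hmP : m ∈ P := hVP ⟨hmV, hm2⟩
  have hfm : f m < f w := hf m hmP
  have hfm' : f m = (1 - st) * f w' + st * f v := by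
    rw [hmdef]; simp [map_add, map_smul]
  have hw'f : f w - δ < f w' := hw'O.2
  nlinarith

private lemma wheel_key {d : ℕ} {V1 V2 V3 T : Set (EuclideanSpace ℝ (Fin d))}
    (oV1 : IsOpen V1) (oV2 : IsOpen V2) (oV3 : IsOpen V3) (oT : IsOpen T)
    (cV1 : Convex ℝ V1) (cV2 : Convex ℝ V2) (cV3 : Convex ℝ V3)
    (h12 : V1 ∩ V2 = V1 ∩ V2 ∩ V3) (h23 : V2 ∩ V3 = V1 ∩ V2 ∩ V3)
    (hne : (V1 ∩ V2 ∩ V3).Nonempty) (hii : V1 ∩ V2 ∩ V3 ∩ T = ∅)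
    {x y z : EuclideanSpace ℝ (Fin d)} (hx1 : x ∈ V1) (hy3 : y ∈ V3)
    (hz2 : z ∈ V2) (hzT : z ∈ T) (hzs : z ∈ segment ℝ x y) : False := by
  obtain ⟨p, hp⟩ := hne
  set P := V1 ∩ V2 ∩ V3 with hPdef
  have oP : IsOpen P := (oV1.inter oV2).inter oV3
  have cP : Convex ℝ P := (cV1.inter cV2).inter cV3
  have hzP : z ∉ closure P := by
    intro hcl
    obtain ⟨q, hqT, hqP⟩ := mem_closure_iff.1 hcl T oT hzT
    have : q ∈ V1 ∩ V2 ∩ V3 ∩ T := ⟨hqP, hqT⟩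
    rw [hii] at this
    exact this
  set g : ℝ → EuclideanSpace ℝ (Fin d) := fun u => p + u • (z - p) with hgdef
  have hgc : Continuous g := by fun_prop
  have hg1 : g 1 = z := by simp [hgdef]
  set S := {u : ℝ | u ∈ Set.Icc (0:ℝ) 1 ∧ g u ∈ P} with hSdef
  have h0S : (0:ℝ) ∈ S := ⟨⟨le_refl 0, zero_le_one⟩, by simpa [hgdef] using hp⟩
  have hbdd : BddAbove S := ⟨1, fun u hu => hu.1.2⟩
  set s := sSup S with hsdef
  have hs0 : 0 ≤ s := le_csSup hbdd h0S
  have hs1' : s ≤ 1 := csSup_le ⟨0, h0S⟩ fun u hu => hu.1.2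
  have hscl : g s ∈ closure P := by
    have h1 : s ∈ closure S := csSup_mem_closure ⟨0, h0S⟩ hbdd
    have h2 : closure S ⊆ closure {u : ℝ | g u ∈ P} :=
      closure_mono fun u hu => hu.2
    have h3 : closure {u : ℝ | g u ∈ P} ⊆ {u : ℝ | g u ∈ closure P} :=
      closure_minimal (fun u hu => subset_closure hu)
        (IsClosed.preimage hgc isClosed_closure)
    exact h3 (h2 h1)
  have hs1 : s < 1 := by
    rcases lt_or_eq_of_le hs1' with h | h
    · exact h
    · exact absurd (by rw [h, hg1] at hscl; exact hscl) hzP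
  have hsP : g s ∉ P := by
    intro hgsP
    have hop : IsOpen {u : ℝ | g u ∈ P} := oP.preimage hgc
    obtain ⟨ε, hε, hb⟩ := Metric.isOpen_iff.1 hop s hgsP
    set u' := min (s + ε/2) ((s+1)/2) with hu'def
    have hu's : s < u' := lt_min (by linarith) (by linarith)
    have hu'1 : u' ≤ 1 := le_trans (min_le_right _ _) (by linarith)
    have hu'd : dist u' s < ε := by
      rw [Real.dist_eq, abs_of_nonneg (by linarith)]
      have := min_le_left (s + ε/2) ((s+1)/2)
      linarith
    have : u' ∈ S := ⟨⟨by linarith, hu'1⟩, hb hu'd⟩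
    linarith [le_csSup hbdd this]
  set w := g s with hwdef
  have hw2 : w ∈ V2 := by
    have hseg : w ∈ segment ℝ p z := by
      rw [segment_eq_image']
      exact ⟨s, ⟨hs0, hs1'⟩, rfl⟩
    exact cV2.segment_subset hp.1.2 hz2 hseg
  have hw1 : w ∉ V1 := fun h => hsP (h12 ▸ (⟨h, hw2⟩ : w ∈ V1 ∩ V2))
  have hw3 : w ∉ V3 := fun h => hsP (h23 ▸ (⟨hw2, h⟩ : w ∈ V2 ∩ V3))
  obtain ⟨f, hf⟩ := geometric_hahn_banach_open_point cP oP hsP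
  have hfx : f x ≤ f w :=
    aux_le cV1 oV2 hw2 hscl (fun a ha => ha.1.1) (fun a ha => h12 ▸ ha) hf hx1
  have hfy : f y ≤ f w :=
    aux_le cV3 oV2 hw2 hscl (fun a ha => ha.2)
      (fun a ha => h23 ▸ (⟨ha.2, ha.1⟩ : _ ∈ V2 ∩ V3)) hf hy3
  have hfz : f z ≤ f w := by
    obtain ⟨a, b, ha, hb, hab, hzz⟩ := hzs
    have : f z = a * f x + b * f y := by rw [← hzz]; simp [map_add, map_smul]
    have h1 : a * f x ≤ a * f w := mul_le_mul_of_nonneg_left hfx ha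
    have h2 : b * f y ≤ b * f w := mul_le_mul_of_nonneg_left hfy hb
    have h3 : a * f w + b * f w = f w := by rw [← add_mul, hab, one_mul]
    linarith
  have hfp : f p < f w := hf p hp
  have hfw : f w = f p + s * (f z - f p) := by
    rw [hwdef, hgdef]; simp [map_add, map_smul, map_sub]; try ring
  nlinarith [mul_le_mul_of_nonneg_left (sub_le_sub_right hfz (f p)) hs0]


/-- A wheel of a realization precludes convexity of the realization;
consequently a wheel of every realization precludes convexity of the code. -/
theorem wheel_not_convex {n : ℕ} (C : Set (Finset (Fin n))) :
    (∀ (d : ℕ) (U : Fin n → Set (EuclideanSpace ℝ (Fin d))) (σ1 σ2 σ3 τ : Finset (Fin n)),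
        IsRealization C U → IsWheelOfRealization U σ1 σ2 σ3 τ →
        ¬∀ i, Convex ℝ (U i)) ∧
    ∀ σ1 σ2 σ3 τ : Finset (Fin n),
      (∀ (d : ℕ) (U : Fin n → Set (EuclideanSpace ℝ (Fin d))),
          IsRealization C U → IsWheelOfRealization U σ1 σ2 σ3 τ) →
      ¬IsConvexCode C := by
  have main : ∀ (d : ℕ) (U : Fin n → Set (EuclideanSpace ℝ (Fin d)))
      (σ1 σ2 σ3 τ : Finset (Fin n)),
      IsRealization C U → IsWheelOfRealization U σ1 σ2 σ3 τ →
      ¬∀ i, Convex ℝ (U i) := by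
    intro d U σ1 σ2 σ3 τ hreal hw hcv
    obtain ⟨⟨h12, h13, h23, hne⟩, hii, hiii⟩ := hw
    have cU : ∀ σ : Finset (Fin n), Convex ℝ (USet U σ) := fun σ =>
      convex_iInter fun i => convex_iInter fun _ => hcv i
    have oU : ∀ σ : Finset (Fin n), IsOpen (USet U σ) := fun σ =>
      isOpen_biInter_finset fun i _ => hreal.1 i
    obtain ⟨x, hx, y, hy, z, hz⟩ := hiii ⟨cU τ, (cU σ1).inter (cU τ),
      (cU σ2).inter (cU τ), (cU σ3).inter (cU τ)⟩
    exact wheel_key (oU σ1) (oU σ2) (oU σ3) (oU τ) (cU σ1) (cU σ2) (cU σ3)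
      h12 h23 hne hii hx.1 hy.1 hz.2.1 hz.2.2 hz.1
  refine ⟨fun d U σ1 σ2 σ3 τ hreal hw => main d U σ1 σ2 σ3 τ hreal hw, ?_⟩
  intro σ1 σ2 σ3 τ h hconv
  obtain ⟨d, U, hreal, hcv⟩ := hconv
  exact main d U σ1 σ2 σ3 τ hreal (h d U hreal) hcv
end

section
/- Let C be a code on n neurons, let U = (U_1, …, U_n) be a realization of C in ℝ^d, and let φ, ψ_1, …, ψ_r be subsets of [n]. Then U_φ ⊆ ⋃_{t=1}^r U_{ψ_t} if and only if Tk_C(φ) ⊆ ⋃_{t=1}^r Tk_C(ψ_t). -/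
open NeuralCode

/-- `U_φ ⊆ ⋃ U_{ψ_t}` iff `Tk_C(φ) ⊆ ⋃ Tk_C(ψ_t)`. -/
theorem trunk_covering_iff {n d r : ℕ} (C : Set (Finset (Fin n)))
    (U : Fin n → Set (EuclideanSpace ℝ (Fin d))) (hU : IsRealization C U)
    (φ : Finset (Fin n)) (ψ : Fin r → Finset (Fin n)) :
    USet U φ ⊆ ⋃ t, USet U (ψ t) ↔ trunk C φ ⊆ ⋃ t, trunk C (ψ t) := by
  classical
  constructor
  · intro h c hc
    obtain ⟨hcC, hphic⟩ := hc
    obtain ⟨x, hx⟩ := (hU.2 c).mp hcC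
    have hxU : ∀ i ∈ c, x ∈ U i := by
      intro i hi
      exact Set.mem_iInter₂.mp hx.1 i hi
    have hxN : ∀ j, j ∉ c → x ∉ U j := by
      intro j hj hxj
      exact hx.2 (Set.mem_iUnion₂.mpr ⟨j, hj, hxj⟩)
    have hxphi : x ∈ USet U φ := Set.mem_iInter₂.mpr fun i hi => hxU i (hphic hi)
    obtain ⟨t, hxt⟩ := Set.mem_iUnion.mp (h hxphi)
    refine Set.mem_iUnion.mpr ⟨t, hcC, fun i hi => ?_⟩
    by_contra hic
    exact hxN i hic (Set.mem_iInter₂.mp hxt i hi)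
  · intro h x hx
    set c : Finset (Fin n) := Finset.univ.filter (fun i => x ∈ U i) with hcdef
    have hmem : ∀ i, i ∈ c ↔ x ∈ U i := by
      intro i; simp [hcdef]
    have hcC : c ∈ C := by
      refine (hU.2 c).mpr ⟨x, ?_, ?_⟩
      · exact Set.mem_iInter₂.mpr fun i hi => (hmem i).mp hi
      · intro hxu
        obtain ⟨j, hj, hxj⟩ := Set.mem_iUnion₂.mp hxu
        exact hj ((hmem j).mpr hxj)
    have hctr : c ∈ trunk C φ :=
      ⟨hcC, fun i hi => (hmem i).mpr (Set.mem_iInter₂.mp hx i hi)⟩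
    obtain ⟨t, hcC', hsub⟩ := Set.mem_iUnion.mp (h hctr)
    exact Set.mem_iUnion.mpr ⟨t, Set.mem_iInter₂.mpr fun i hi => (hmem i).mp (hsub hi)⟩
end

section
/- Let C be a code on n neurons, let U be a realization of C in ℝ^d, and let σ1, σ2, σ3, τ ⊆ [n]. Then: (a) condition W(i) (U_{σj} ∩ U_{σk} = U_{σ1} ∩ U_{σ2} ∩ U_{σ3} ≠ ∅ for all 1 ≤ j < k ≤ 3) holds for U if and only if P(i) holds; (b) condition W(ii) (U_{σ1} ∩ U_{σ2} ∩ U_{σ3} ∩ U_τ = ∅) holds for U if and only if P(ii) holds; (c) condition W(iii)◦ (U_{σj} ∩ U_τ ≠ ∅ for j = 1, 2, 3) holds for U if and only if P(iii)◦ holds. In particular, each of these geometric conditions holds for one realization of C exactly when it holds for any other realization of C. -/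
open NeuralCode


section Aux

variable {n d : ℕ} {C : Set (Finset (Fin n))} {U : Fin n → Set (EuclideanSpace ℝ (Fin d))}

lemma mem_USet {x : EuclideanSpace ℝ (Fin d)} {σ : Finset (Fin n)} :
    x ∈ USet U σ ↔ ∀ i ∈ σ, x ∈ U i := by
  simp [USet]

lemma USet_union (σ σ' : Finset (Fin n)) :
    USet U (σ ∪ σ') = USet U σ ∩ USet U σ' := by
  ext x
  simp only [mem_USet, Set.mem_inter_iff, Finset.mem_union]
  constructor
  · intro h
    exact ⟨fun i hi => h i (Or.inl hi), fun i hi => h i (Or.inr hi)⟩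
  · rintro ⟨h1, h2⟩ i (hi | hi)
    exacts [h1 i hi, h2 i hi]

lemma mem_USet_of_atom {x : EuclideanSpace ℝ (Fin d)} {c : Finset (Fin n)}
    (hx : x ∈ codeAtom U c) (σ : Finset (Fin n)) : x ∈ USet U σ ↔ σ ⊆ c := by
  obtain ⟨hx1, hx2⟩ := hx
  constructor
  · intro h i hi
    by_contra hic
    exact hx2 (Set.mem_iUnion₂.2 ⟨i, hic, mem_USet.1 h i hi⟩)
  · intro hsub
    exact mem_USet.2 fun i hi => mem_USet.1 hx1 i (hsub hi)

lemma exists_codeword (hU : IsRealization C U) (x : EuclideanSpace ℝ (Fin d)) :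
    ∃ c ∈ C, ∀ σ : Finset (Fin n), x ∈ USet U σ ↔ σ ⊆ c := by
  classical
  set c : Finset (Fin n) := Finset.univ.filter (fun i => x ∈ U i) with hc
  have hatom : x ∈ codeAtom U c := by
    constructor
    · exact mem_USet.2 fun i hi => (Finset.mem_filter.1 hi).2
    · intro hmem
      obtain ⟨j, hj, hxj⟩ := Set.mem_iUnion₂.1 hmem
      exact hj (Finset.mem_filter.2 ⟨Finset.mem_univ j, hxj⟩)
  exact ⟨c, (hU.2 c).2 ⟨x, hatom⟩, fun σ => mem_USet_of_atom hatom σ⟩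

lemma USet_subset_iff (hU : IsRealization C U) {α β : Finset (Fin n)} :
    USet U α ⊆ USet U β ↔ trunk C α ⊆ trunk C β := by
  constructor
  · intro h c hc
    obtain ⟨hcC, hac⟩ := hc
    obtain ⟨x, hx⟩ := (hU.2 c).1 hcC
    have hxa : x ∈ USet U α := (mem_USet_of_atom hx α).2 hac
    exact ⟨hcC, (mem_USet_of_atom hx β).1 (h hxa)⟩
  · intro h x hx
    obtain ⟨c, hcC, hc⟩ := exists_codeword hU x
    have : c ∈ trunk C β := h ⟨hcC, (hc α).1 hx⟩
    exact (hc β).2 this.2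

lemma USet_eq_iff (hU : IsRealization C U) {α β : Finset (Fin n)} :
    USet U α = USet U β ↔ trunk C α = trunk C β := by
  rw [Set.Subset.antisymm_iff, Set.Subset.antisymm_iff,
    USet_subset_iff hU, USet_subset_iff hU]

lemma USet_nonempty_iff (hU : IsRealization C U) {σ : Finset (Fin n)} :
    (USet U σ).Nonempty ↔ σ ∈ neuralComplex C := by
  constructor
  · rintro ⟨x, hx⟩
    obtain ⟨c, hcC, hc⟩ := exists_codeword hU x
    exact ⟨c, hcC, (hc σ).1 hx⟩
  · rintro ⟨c, hcC, hsub⟩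
    obtain ⟨x, hx⟩ := (hU.2 c).1 hcC
    exact ⟨x, (mem_USet_of_atom hx σ).2 hsub⟩

lemma wheelWi_iff (hU : IsRealization C U) (σ1 σ2 σ3 : Finset (Fin n)) :
    WheelWi U σ1 σ2 σ3 ↔ CondPi C σ1 σ2 σ3 := by
  unfold WheelWi CondPi
  rw [← USet_union σ1 σ2, ← USet_union σ1 σ3, ← USet_union σ2 σ3]
  have h123 : USet U (σ1 ∪ σ2) ∩ USet U σ3 = USet U (σ1 ∪ σ2 ∪ σ3) :=
    (USet_union _ _).symm
  rw [h123, USet_eq_iff hU, USet_eq_iff hU, USet_eq_iff hU, USet_nonempty_iff hU]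
  tauto

lemma wheelWii_iff (hU : IsRealization C U) (σ1 σ2 σ3 τ : Finset (Fin n)) :
    WheelWii U σ1 σ2 σ3 τ ↔ CondPii C σ1 σ2 σ3 τ := by
  unfold WheelWii CondPii
  rw [show USet U σ1 ∩ USet U σ2 ∩ USet U σ3 ∩ USet U τ = USet U (σ1 ∪ σ2 ∪ σ3 ∪ τ) from by
      rw [USet_union, USet_union, USet_union]]
  rw [← Set.not_nonempty_iff_eq_empty, USet_nonempty_iff hU]

lemma wheelWiiiCirc_iff (hU : IsRealization C U) (σ1 σ2 σ3 τ : Finset (Fin n)) :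
    WheelWiiiCirc U σ1 σ2 σ3 τ ↔ CondPiiiCirc C σ1 σ2 σ3 τ := by
  unfold WheelWiiiCirc CondPiiiCirc
  rw [← USet_union σ1 τ, ← USet_union σ2 τ, ← USet_union σ3 τ,
    USet_nonempty_iff hU, USet_nonempty_iff hU, USet_nonempty_iff hU]

end Aux

/-- the geometric conditions W(i), W(ii), W(iii)◦ for a realization are
equivalent to the combinatorial conditions P(i), P(ii), P(iii)◦; in particular each
holds for one realization exactly when it holds for any other realization. -/
theorem wheel_conditions_iff_combinatorial {n d : ℕ} (C : Set (Finset (Fin n)))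
    (U : Fin n → Set (EuclideanSpace ℝ (Fin d))) (hU : IsRealization C U)
    (σ1 σ2 σ3 τ : Finset (Fin n)) :
    (WheelWi U σ1 σ2 σ3 ↔ CondPi C σ1 σ2 σ3) ∧
    (WheelWii U σ1 σ2 σ3 τ ↔ CondPii C σ1 σ2 σ3 τ) ∧
    (WheelWiiiCirc U σ1 σ2 σ3 τ ↔ CondPiiiCirc C σ1 σ2 σ3 τ) ∧
    ∀ (e : ℕ) (V : Fin n → Set (EuclideanSpace ℝ (Fin e))), IsRealization C V →
      (WheelWi U σ1 σ2 σ3 ↔ WheelWi V σ1 σ2 σ3) ∧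
      (WheelWii U σ1 σ2 σ3 τ ↔ WheelWii V σ1 σ2 σ3 τ) ∧
      (WheelWiiiCirc U σ1 σ2 σ3 τ ↔ WheelWiiiCirc V σ1 σ2 σ3 τ) := by
  refine ⟨wheelWi_iff hU σ1 σ2 σ3, wheelWii_iff hU σ1 σ2 σ3 τ,
    wheelWiiiCirc_iff hU σ1 σ2 σ3 τ, fun e V hV => ?_⟩
  rw [wheelWi_iff hU, wheelWii_iff hU, wheelWiiiCirc_iff hU,
    wheelWi_iff hV, wheelWii_iff hV, wheelWiiiCirc_iff hV]
  tauto
end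

section
/- Let C be a code on n neurons and let (σ1, σ2, σ3, τ) be a sprocket of C. Then: (a) for every realization U of C in ℝ^d in which U_τ and U_{σj} ∩ U_τ (j = 1, 2, 3) are convex, there exists a line segment with one endpoint in U_{σ1} ∩ U_τ and the other endpoint in U_{σ3} ∩ U_τ that meets U_{σ2} ∩ U_τ (so every sprocket is a wheel of every realization of C); (b) consequently C is non-convex: for no dimension d does C admit a realization in ℝ^d by convex open sets. -/
set_option linter.unusedSectionVars false


namespace NeuralCode

open scoped Classical in
noncomputable def ptCode {ι : Type*} [Fintype ι] {d : ℕ}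
    (U : ι → Set (EuclideanSpace ℝ (Fin d))) (q : EuclideanSpace ℝ (Fin d)) : Finset ι :=
  Finset.univ.filter fun i => q ∈ U i

variable {ι : Type*} [Fintype ι] [DecidableEq ι] {d : ℕ} {C : Set (Finset ι)}
  {U : ι → Set (EuclideanSpace ℝ (Fin d))} {q : EuclideanSpace ℝ (Fin d)} {σ σ' : Finset ι}

lemma mem_ptCode {i : ι} : i ∈ ptCode U q ↔ q ∈ U i := by
  classical simp [ptCode]

lemma mem_USet_iff : q ∈ USet U σ ↔ ∀ i ∈ σ, q ∈ U i := by simp [USet]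

lemma subset_ptCode_iff : σ ⊆ ptCode U q ↔ q ∈ USet U σ := by
  simp only [mem_USet_iff, Finset.subset_iff, mem_ptCode]

lemma ptCode_mem_code (hreal : IsRealization C U) (q : EuclideanSpace ℝ (Fin d)) :
    ptCode U q ∈ C := by
  refine (hreal.2 _).2 ⟨q, ?_, ?_⟩
  · exact mem_USet_iff.2 fun i hi => mem_ptCode.1 hi
  · intro hq
    simp only [Set.mem_iUnion, exists_prop] at hq
    obtain ⟨j, hj, hjU⟩ := hq
    exact hj (mem_ptCode.2 hjU)

lemma USet_subset_of_trunk_subset (hreal : IsRealization C U)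
    (h : trunk C σ ⊆ trunk C σ') : USet U σ ⊆ USet U σ' := fun q hq => by
  have h1 : ptCode U q ∈ trunk C σ := ⟨ptCode_mem_code hreal q, subset_ptCode_iff.2 hq⟩
  exact subset_ptCode_iff.1 (h h1).2

lemma USet_nonempty_of_mem_complex (hreal : IsRealization C U)
    (h : σ ∈ neuralComplex C) : (USet U σ).Nonempty := by
  obtain ⟨c, hc, hsub⟩ := h
  obtain ⟨q, hq1, -⟩ := (hreal.2 c).1 hc
  exact ⟨q, mem_USet_iff.2 fun i hi => mem_USet_iff.1 hq1 i (hsub hi)⟩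

lemma mem_complex_of_USet_nonempty (hreal : IsRealization C U)
    (h : (USet U σ).Nonempty) : σ ∈ neuralComplex C := by
  obtain ⟨q, hq⟩ := h
  exact ⟨ptCode U q, ptCode_mem_code hreal q, subset_ptCode_iff.2 hq⟩

lemma USet_union : USet U (σ ∪ σ') = USet U σ ∩ USet U σ' := by
  ext q
  simp only [Set.mem_inter_iff, mem_USet_iff, Finset.mem_union]
  constructor
  · exact fun h => ⟨fun i hi => h i (Or.inl hi), fun i hi => h i (Or.inr hi)⟩
  · rintro ⟨h1, h2⟩ i (hi | hi)
    exacts [h1 i hi, h2 i hi]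

lemma USet_isOpen (hU : ∀ i, IsOpen (U i)) : IsOpen (USet U σ) :=
  isOpen_biInter_finset fun i _ => hU i

lemma USet_convex (hU : ∀ i, Convex ℝ (U i)) : Convex ℝ (USet U σ) :=
  convex_iInter fun i => convex_iInter fun _ => hU i


end NeuralCode

open NeuralCode


section WheelAux

open Set NeuralCode


variable {E : Type*} [NormedAddCommGroup E] [NormedSpace ℝ E]

lemma gauge_translate_mem_iff {S : Set E} (hconv : Convex ℝ S) (hopen : IsOpen S)
    {p : E} (hp : p ∈ S) (q : E) :
    q ∈ S ↔ gauge ((fun w => p + w) ⁻¹' S) (q - p) < 1 := by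
  have hKconv : Convex ℝ ((fun w => p + w) ⁻¹' S) := hconv.translate_preimage_right p
  have hKopen : IsOpen ((fun w => p + w) ⁻¹' S) := hopen.preimage (continuous_add_left p)
  have h0 : (0 : E) ∈ (fun w => p + w) ⁻¹' S := by simpa using hp
  have hset := gauge_lt_one_eq_self_of_isOpen hKconv h0 hKopen
  constructor
  · intro hq
    have : q - p ∈ {x | gauge ((fun w => p + w) ⁻¹' S) x < 1} := by
      rw [hset]; simpa using hq
    exact this
  · intro hq
    have h2 : q - p ∈ (fun w => p + w) ⁻¹' S := by rw [← hset]; exact hq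
    simpa using h2

lemma gauge_translate_absorbent {S : Set E} (hopen : IsOpen S) {p : E} (hp : p ∈ S) :
    Absorbent ℝ ((fun w => p + w) ⁻¹' S) := by
  have hKopen : IsOpen ((fun w => p + w) ⁻¹' S) := hopen.preimage (continuous_add_left p)
  have h0 : (0 : E) ∈ (fun w => p + w) ⁻¹' S := by simpa using hp
  exact absorbent_nhds_zero (hKopen.mem_nhds h0)

lemma gauge_line_convexOn {K : Set E} (hKconv : Convex ℝ K) (habs : Absorbent ℝ K)
    (w0 w1 : E) :
    ConvexOn ℝ univ (fun a : ℝ => gauge K ((1 - a) • w0 + a • w1)) := by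
  refine ⟨convex_univ, ?_⟩
  intro a _ b _ θ θ' hθ hθ' hsum
  have hcomb : (1 - (θ • a + θ' • b)) • w0 + (θ • a + θ' • b) • w1 =
      θ • ((1 - a) • w0 + a • w1) + θ' • ((1 - b) • w0 + b • w1) := by
    have h1 : θ' = 1 - θ := by linarith
    subst h1
    simp only [smul_eq_mul]
    module
  show gauge K ((1 - (θ • a + θ' • b)) • w0 + (θ • a + θ' • b) • w1) ≤
      θ • gauge K ((1 - a) • w0 + a • w1) + θ' • gauge K ((1 - b) • w0 + b • w1)
  rw [hcomb]
  calc gauge K (θ • ((1 - a) • w0 + a • w1) + θ' • ((1 - b) • w0 + b • w1))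
      ≤ gauge K (θ • ((1 - a) • w0 + a • w1)) + gauge K (θ' • ((1 - b) • w0 + b • w1)) :=
        gauge_add_le hKconv habs _ _
    _ = θ • gauge K ((1 - a) • w0 + a • w1) + θ' • gauge K ((1 - b) • w0 + b • w1) := by
        rw [gauge_smul_of_nonneg hθ, gauge_smul_of_nonneg hθ']

/-- If the gauges (centered at a common point `p ∈ A ∩ B`) of `u - p` for both `A` and `B`
are at most 1, and `u ∈ T` open, then `A ∩ B ∩ T` is nonempty. -/
lemma exists_mem_inter_of_gauge_le_one {A B T : Set E}
    (hAc : Convex ℝ A) (hAo : IsOpen A) (hBc : Convex ℝ B) (hBo : IsOpen B)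
    (hTo : IsOpen T) {p u : E} (hpA : p ∈ A) (hpB : p ∈ B) (huT : u ∈ T)
    (hga : gauge ((fun w => p + w) ⁻¹' A) (u - p) ≤ 1)
    (hgb : gauge ((fun w => p + w) ⁻¹' B) (u - p) ≤ 1) :
    ∃ q, q ∈ A ∧ q ∈ B ∧ q ∈ T := by
  rcases eq_or_ne u p with rfl | hne
  · exact ⟨u, hpA, hpB, huT⟩
  obtain ⟨ε, hε, hball⟩ := Metric.isOpen_iff.1 hTo u huT
  have hnorm : 0 < ‖u - p‖ := by
    rw [norm_pos_iff]; exact sub_ne_zero_of_ne hne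
  set m : ℝ := min (ε / (2 * ‖u - p‖)) 2⁻¹ with hm
  have hm0 : 0 < m := lt_min (by positivity) (by norm_num)
  have hm1 : m < 1 := lt_of_le_of_lt (min_le_right _ _) (by norm_num)
  set c : ℝ := 1 - m with hc
  have hc0 : 0 < c := by simp only [hc]; linarith
  have hc1 : c < 1 := by simp only [hc]; linarith
  refine ⟨p + c • (u - p), ?_, ?_, ?_⟩
  · rw [gauge_translate_mem_iff hAc hAo hpA, add_sub_cancel_left,
      gauge_smul_of_nonneg hc0.le, smul_eq_mul]
    calc c * gauge ((fun w => p + w) ⁻¹' A) (u - p) ≤ c * 1 := by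
          exact mul_le_mul_of_nonneg_left hga hc0.le
      _ < 1 := by linarith
  · rw [gauge_translate_mem_iff hBc hBo hpB, add_sub_cancel_left,
      gauge_smul_of_nonneg hc0.le, smul_eq_mul]
    calc c * gauge ((fun w => p + w) ⁻¹' B) (u - p) ≤ c * 1 := by
          exact mul_le_mul_of_nonneg_left hgb hc0.le
      _ < 1 := by linarith
  · apply hball
    have : p + c • (u - p) - u = (c - 1) • (u - p) := by module
    rw [Metric.mem_ball, dist_eq_norm, this, norm_smul]
    have habs : ‖c - 1‖ = m := by
      rw [Real.norm_eq_abs, abs_of_nonpos (by linarith), hc]; ring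
    rw [habs]
    calc m * ‖u - p‖ ≤ ε / (2 * ‖u - p‖) * ‖u - p‖ := by
          exact mul_le_mul_of_nonneg_right (min_le_left _ _) hnorm.le
      _ = ε / 2 := by field_simp
      _ < ε := by linarith

/-- "top-two tie": the strict unique maximum of the three gauges cannot exceed 1. -/
lemma tie_top {A B Cs : Set E}
    (hAc : Convex ℝ A) (hAo : IsOpen A) (hBc : Convex ℝ B) (hBo : IsOpen B)
    (hCc : Convex ℝ Cs) (hCo : IsOpen Cs) (hsub : A ∩ B ⊆ Cs)
    {p u : E} (hpA : p ∈ A) (hpB : p ∈ B) (hpC : p ∈ Cs)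
    (hga : gauge ((fun w => p + w) ⁻¹' A) (u - p) < gauge ((fun w => p + w) ⁻¹' Cs) (u - p))
    (hgb : gauge ((fun w => p + w) ⁻¹' B) (u - p) < gauge ((fun w => p + w) ⁻¹' Cs) (u - p))
    (hgc : 1 < gauge ((fun w => p + w) ⁻¹' Cs) (u - p)) : False := by
  set g : ℝ := gauge ((fun w => p + w) ⁻¹' Cs) (u - p) with hg
  have hg0 : 0 < g := lt_trans one_pos hgc
  have hmemA : p + g⁻¹ • (u - p) ∈ A := by
    rw [gauge_translate_mem_iff hAc hAo hpA, add_sub_cancel_left,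
      gauge_smul_of_nonneg (inv_nonneg.2 hg0.le), smul_eq_mul]
    rw [inv_mul_lt_one₀ hg0]
    exact hga
  have hmemB : p + g⁻¹ • (u - p) ∈ B := by
    rw [gauge_translate_mem_iff hBc hBo hpB, add_sub_cancel_left,
      gauge_smul_of_nonneg (inv_nonneg.2 hg0.le), smul_eq_mul]
    rw [inv_mul_lt_one₀ hg0]
    exact hgb
  have hmemC : p + g⁻¹ • (u - p) ∈ Cs := hsub ⟨hmemA, hmemB⟩
  rw [gauge_translate_mem_iff hCc hCo hpC, add_sub_cancel_left,
    gauge_smul_of_nonneg (inv_nonneg.2 hg0.le), smul_eq_mul] at hmemC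
  rw [← hg, inv_mul_cancel₀ hg0.ne'] at hmemC
  exact lt_irrefl 1 hmemC

lemma wheel_contradiction
    {U1 U2 U3 T : Set E}
    (hU1o : IsOpen U1) (hU2o : IsOpen U2) (hU3o : IsOpen U3) (hTo : IsOpen T)
    (hU1c : Convex ℝ U1) (hU2c : Convex ℝ U2) (hU3c : Convex ℝ U3) (hTc : Convex ℝ T)
    (e12 : U1 ∩ U2 ⊆ U3) (e13 : U1 ∩ U3 ⊆ U2) (e23 : U2 ∩ U3 ⊆ U1)
    (hquad : U1 ∩ U2 ∩ U3 ∩ T = ∅)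
    {p : E} (hp1 : p ∈ U1) (hp2 : p ∈ U2) (hp3 : p ∈ U3)
    {x y z : E} (hx1 : x ∈ U1) (hxT : x ∈ T) (hy3 : y ∈ U3) (hyT : y ∈ T)
    (hz2 : z ∈ U2) (hzT : z ∈ T) (hzseg : z ∈ segment ℝ x y) : False := by
  classical
  have hquad' : ∀ q : E, q ∈ U1 → q ∈ U2 → q ∈ U3 → q ∈ T → False := by
    intro q h1 h2 h3 h4
    have hmem : q ∈ U1 ∩ U2 ∩ U3 ∩ T := ⟨⟨⟨h1, h2⟩, h3⟩, h4⟩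
    rw [hquad] at hmem
    exact hmem
  -- gauges along the base line
  set G1 : ℝ → ℝ := fun a => gauge ((fun w => p + w) ⁻¹' U1) ((1 - a) • (x - p) + a • (y - p))
    with hG1d
  set G2 : ℝ → ℝ := fun a => gauge ((fun w => p + w) ⁻¹' U2) ((1 - a) • (x - p) + a • (y - p))
    with hG2d
  set G3 : ℝ → ℝ := fun a => gauge ((fun w => p + w) ⁻¹' U3) ((1 - a) • (x - p) + a • (y - p))
    with hG3d
  set β : ℝ → E := fun a => (1 - a) • x + a • y with hβd
  have hβv : ∀ a : ℝ, β a - p = (1 - a) • (x - p) + a • (y - p) := by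
    intro a; simp only [hβd]; module
  have hβT : ∀ a ∈ Icc (0:ℝ) 1, β a ∈ T := by
    intro a ha
    exact hTc hxT hyT (by linarith [ha.1, ha.2]) ha.1 (by ring)
  -- membership reformulations
  have hmem1 : ∀ a : ℝ, β a ∈ U1 ↔ G1 a < 1 := by
    intro a; rw [gauge_translate_mem_iff hU1c hU1o hp1, hβv a]
  have hmem2 : ∀ a : ℝ, β a ∈ U2 ↔ G2 a < 1 := by
    intro a; rw [gauge_translate_mem_iff hU2c hU2o hp2, hβv a]
  have hmem3 : ∀ a : ℝ, β a ∈ U3 ↔ G3 a < 1 := by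
    intro a; rw [gauge_translate_mem_iff hU3c hU3o hp3, hβv a]
  -- convexity and continuity
  have hG1cv : ConvexOn ℝ univ G1 :=
    gauge_line_convexOn (hU1c.translate_preimage_right p) (gauge_translate_absorbent hU1o hp1) _ _
  have hG2cv : ConvexOn ℝ univ G2 :=
    gauge_line_convexOn (hU2c.translate_preimage_right p) (gauge_translate_absorbent hU2o hp2) _ _
  have hG3cv : ConvexOn ℝ univ G3 :=
    gauge_line_convexOn (hU3c.translate_preimage_right p) (gauge_translate_absorbent hU3o hp3) _ _
  have hG1ct : Continuous G1 := hG1cv.locallyLipschitz.continuous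
  have hG2ct : Continuous G2 := hG2cv.locallyLipschitz.continuous
  have hG3ct : Continuous G3 := hG3cv.locallyLipschitz.continuous
  -- at most one gauge ≤ 1 at each point of the base segment
  have hat12 : ∀ a ∈ Icc (0:ℝ) 1, ¬(G1 a ≤ 1 ∧ G2 a ≤ 1) := by
    rintro a ha ⟨h1, h2⟩
    obtain ⟨q, hqA, hqB, hqT⟩ := exists_mem_inter_of_gauge_le_one hU1c hU1o hU2c hU2o hTo
      hp1 hp2 (hβT a ha) ((hβv a).symm ▸ h1) ((hβv a).symm ▸ h2)
    exact hquad' q hqA hqB (e12 ⟨hqA, hqB⟩) hqT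
  have hat13 : ∀ a ∈ Icc (0:ℝ) 1, ¬(G1 a ≤ 1 ∧ G3 a ≤ 1) := by
    rintro a ha ⟨h1, h2⟩
    obtain ⟨q, hqA, hqB, hqT⟩ := exists_mem_inter_of_gauge_le_one hU1c hU1o hU3c hU3o hTo
      hp1 hp3 (hβT a ha) ((hβv a).symm ▸ h1) ((hβv a).symm ▸ h2)
    exact hquad' q hqA (e13 ⟨hqA, hqB⟩) hqB hqT
  have hat23 : ∀ a ∈ Icc (0:ℝ) 1, ¬(G2 a ≤ 1 ∧ G3 a ≤ 1) := by
    rintro a ha ⟨h1, h2⟩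
    obtain ⟨q, hqA, hqB, hqT⟩ := exists_mem_inter_of_gauge_le_one hU2c hU2o hU3c hU3o hTo
      hp2 hp3 (hβT a ha) ((hβv a).symm ▸ h1) ((hβv a).symm ▸ h2)
    exact hquad' q (e23 ⟨hqA, hqB⟩) hqA hqB hqT
  -- tie lemmas: no strict unique maximum above 1
  have htie3 : ∀ a : ℝ, G1 a < G3 a → G2 a < G3 a → 1 < G3 a → False := by
    intro a h1 h2 h3
    refine tie_top hU1c hU1o hU2c hU2o hU3c hU3o e12 hp1 hp2 hp3 (u := β a) ?_ ?_ ?_ <;>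
      rw [hβv a]
    exacts [h1, h2, h3]
  have htie1 : ∀ a : ℝ, G2 a < G1 a → G3 a < G1 a → 1 < G1 a → False := by
    intro a h1 h2 h3
    refine tie_top hU2c hU2o hU3c hU3o hU1c hU1o e23 hp2 hp3 hp1 (u := β a) ?_ ?_ ?_ <;>
      rw [hβv a]
    exacts [h1, h2, h3]
  -- z as a point on the parametrized line
  obtain ⟨t, ht, hzt⟩ : ∃ t ∈ Icc (0:ℝ) 1, (1 - t) • x + t • y = z := by
    rw [segment_eq_image] at hzseg
    obtain ⟨t, ht, h⟩ := hzseg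
    exact ⟨t, ht, h⟩
  have hβ0 : β 0 = x := by simp [hβd]
  have hβ1 : β 1 = y := by simp [hβd]
  have hβt : β t = z := hzt
  -- non-memberships
  have hxn2 : x ∉ U2 := fun h => hquad' x hx1 h (e12 ⟨hx1, h⟩) hxT
  have hxn3 : x ∉ U3 := fun h => hquad' x hx1 (e13 ⟨hx1, h⟩) h hxT
  have hyn1 : y ∉ U1 := fun h => hquad' y h (e13 ⟨h, hy3⟩) hy3 hyT
  have hyn2 : y ∉ U2 := fun h => hquad' y (e23 ⟨h, hy3⟩) h hy3 hyT
  have hzn1 : z ∉ U1 := fun h => hquad' z h hz2 (e12 ⟨h, hz2⟩) hzT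
  have hzn3 : z ∉ U3 := fun h => hquad' z (e23 ⟨hz2, h⟩) hz2 h hzT
  -- gauge values at the three base points
  have hG1_0 : G1 0 < 1 := (hmem1 0).1 (by rw [hβ0]; exact hx1)
  have hG2_0 : 1 ≤ G2 0 := not_lt.1 fun h => hxn2 (by rw [← hβ0]; exact (hmem2 0).2 h)
  have hG3_0 : 1 ≤ G3 0 := not_lt.1 fun h => hxn3 (by rw [← hβ0]; exact (hmem3 0).2 h)
  have hG2_t : G2 t < 1 := (hmem2 t).1 (by rw [hβt]; exact hz2)
  have hG1_t : 1 ≤ G1 t := not_lt.1 fun h => hzn1 (by rw [← hβt]; exact (hmem1 t).2 h)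
  have hG3_t : 1 ≤ G3 t := not_lt.1 fun h => hzn3 (by rw [← hβt]; exact (hmem3 t).2 h)
  have hG3_1 : G3 1 < 1 := (hmem3 1).1 (by rw [hβ1]; exact hy3)
  have hG2_1 : 1 ≤ G2 1 := not_lt.1 fun h => hyn2 (by rw [← hβ1]; exact (hmem2 1).2 h)
  -- IVT on [0, t] for G2 - G1
  obtain ⟨l, hlmem, hl⟩ : ∃ l ∈ Icc (0:ℝ) t, G2 l - G1 l = 0 := by
    have hcont : ContinuousOn (fun a => G2 a - G1 a) (Icc 0 t) :=
      (hG2ct.sub hG1ct).continuousOn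
    have h0mem : (0:ℝ) ∈ Icc (G2 t - G1 t) (G2 0 - G1 0) :=
      ⟨by linarith, by linarith⟩
    obtain ⟨l, hl, h⟩ := intermediate_value_Icc' ht.1 hcont h0mem
    exact ⟨l, hl, h⟩
  have hl21 : G2 l = G1 l := by linarith
  have hl0 : 0 < l := by
    rcases lt_or_eq_of_le hlmem.1 with h | h
    · exact h
    · exfalso; rw [← h] at hl; linarith
  have hlt : l < t := by
    rcases lt_or_eq_of_le hlmem.2 with h | h
    · exact h
    · exfalso; rw [h] at hl; linarith
  have hlI : l ∈ Icc (0:ℝ) 1 := ⟨hlmem.1, le_trans hlmem.2 ht.2⟩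
  have hW1 : 1 < G1 l := by
    by_contra h
    exact hat12 l hlI ⟨not_lt.1 h, by rw [hl21]; exact not_lt.1 h⟩
  have hG3l : G3 l ≤ G1 l := by
    by_contra h
    push_neg at h
    exact htie3 l h (by rw [hl21]; exact h) (lt_trans hW1 h)
  -- IVT on [t, 1] for G2 - G3
  obtain ⟨r, hrmem, hr⟩ : ∃ r ∈ Icc t 1, G2 r - G3 r = 0 := by
    have hcont : ContinuousOn (fun a => G2 a - G3 a) (Icc t 1) :=
      (hG2ct.sub hG3ct).continuousOn
    have h0mem : (0:ℝ) ∈ Icc (G2 t - G3 t) (G2 1 - G3 1) :=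
      ⟨by linarith, by linarith⟩
    obtain ⟨r, hrr, h⟩ := intermediate_value_Icc ht.2 hcont h0mem
    exact ⟨r, hrr, h⟩
  have hr23 : G2 r = G3 r := by linarith
  have hrt : t < r := by
    rcases lt_or_eq_of_le hrmem.1 with h | h
    · exact h
    · exfalso; rw [← h] at hr; linarith
  have hr1 : r < 1 := by
    rcases lt_or_eq_of_le hrmem.2 with h | h
    · exact h
    · exfalso; rw [h] at hr; linarith
  have hrI : r ∈ Icc (0:ℝ) 1 := ⟨le_trans ht.1 hrmem.1, hrmem.2⟩
  have hW2 : 1 < G3 r := by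
    by_contra h
    exact hat23 r hrI ⟨by rw [hr23]; exact not_lt.1 h, not_lt.1 h⟩
  have hG1r : G1 r ≤ G3 r := by
    by_contra h
    push_neg at h
    exact htie1 r (by rw [hr23]; exact h) h (lt_trans hW2 h)
  -- convexity of G1 : value at l from values at 0 and r
  have hlr : l < r := lt_trans hlt hrt
  have hr0 : (0:ℝ) < r := lt_trans hl0 hlr
  have hcomb1 : G1 l ≤ ((r - l)/r) * G1 0 + (l/r) * G1 r := by
    have harg : ((r - l)/r) • (0:ℝ) + (l/r) • r = l := by
      simp only [smul_eq_mul, mul_zero, zero_add]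
      rw [div_mul_eq_mul_div, div_eq_iff hr0.ne']
    have h := hG1cv.2 (mem_univ (0:ℝ)) (mem_univ r)
      (div_nonneg (by linarith : (0:ℝ) ≤ r - l) hr0.le) (div_nonneg hl0.le hr0.le)
      (by field_simp; ring)
    rw [harg] at h
    simpa [smul_eq_mul] using h
  have hl1 : l < 1 := lt_trans hlr hr1
  have hcomb3 : G3 r ≤ ((1 - r)/(1 - l)) * G3 l + ((r - l)/(1 - l)) * G3 1 := by
    have h1l : (0:ℝ) < 1 - l := by linarith
    have harg : ((1 - r)/(1 - l)) • l + ((r - l)/(1 - l)) • (1:ℝ) = r := by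
      simp only [smul_eq_mul, div_mul_eq_mul_div, mul_one]
      rw [← add_div, div_eq_iff h1l.ne']
      ring
    have h := hG3cv.2 (mem_univ l) (mem_univ (1:ℝ))
      (div_nonneg (by linarith : (0:ℝ) ≤ 1 - r) h1l.le) (div_nonneg (by linarith : (0:ℝ) ≤ r - l) h1l.le)
      (by field_simp; ring)
    rw [harg] at h
    simpa [smul_eq_mul] using h
  -- clean versions
  have h1l : (0:ℝ) < 1 - l := by linarith
  have e1 : r * G1 l ≤ (r - l) * G1 0 + l * G1 r := by
    have := mul_le_mul_of_nonneg_left hcomb1 hr0.le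
    calc r * G1 l ≤ r * (((r - l)/r) * G1 0 + (l/r) * G1 r) := this
      _ = (r - l) * G1 0 + l * G1 r := by field_simp
  have e3 : (1 - l) * G3 r ≤ (1 - r) * G3 l + (r - l) * G3 1 := by
    have := mul_le_mul_of_nonneg_left hcomb3 h1l.le
    calc (1 - l) * G3 r ≤ (1 - l) * (((1 - r)/(1 - l)) * G3 l + ((r - l)/(1 - l)) * G3 1) := this
      _ = (1 - r) * G3 l + (r - l) * G3 1 := by field_simp
  -- final arithmetic contradiction
  have hA : 0 < G1 l - 1 := by linarith
  have c1 : (r - l) * G1 0 < (r - l) * 1 :=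
    mul_lt_mul_of_pos_left hG1_0 (by linarith)
  have c2 : l * G1 r ≤ l * G3 r := mul_le_mul_of_nonneg_left hG1r hl0.le
  have key1 : r * (G1 l - 1) < l * (G3 r - 1) := by linarith [e1, c1, c2]
  have c3 : (1 - r) * G3 l ≤ (1 - r) * G1 l :=
    mul_le_mul_of_nonneg_left hG3l (by linarith)
  have c4 : (r - l) * G3 1 < (r - l) * 1 :=
    mul_lt_mul_of_pos_left hG3_1 (by linarith)
  have key3 : (1 - l) * (G3 r - 1) < (1 - r) * (G1 l - 1) := by linarith [e3, c3, c4]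
  have m1 : (1 - l) * (r * (G1 l - 1)) < (1 - l) * (l * (G3 r - 1)) :=
    mul_lt_mul_of_pos_left key1 h1l
  have m2 : l * ((1 - l) * (G3 r - 1)) < l * ((1 - r) * (G1 l - 1)) :=
    mul_lt_mul_of_pos_left key3 hl0
  linarith [m1, m2, mul_pos (sub_pos.2 hlr) hA]


end WheelAux

/-- every sprocket is a wheel of every realization, and codes with
sprockets are non-convex. -/
theorem sprocket_is_wheel_and_nonconvex {n : ℕ} (C : Set (Finset (Fin n)))
    (σ1 σ2 σ3 τ : Finset (Fin n)) (hs : IsSprocket C σ1 σ2 σ3 τ) :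
    (∀ (d : ℕ) (U : Fin n → Set (EuclideanSpace ℝ (Fin d))), IsRealization C U →
        Convex ℝ (USet U τ) → Convex ℝ (USet U σ1 ∩ USet U τ) →
        Convex ℝ (USet U σ2 ∩ USet U τ) → Convex ℝ (USet U σ3 ∩ USet U τ) →
        ∃ x ∈ USet U σ1 ∩ USet U τ, ∃ y ∈ USet U σ3 ∩ USet U τ,
          (segment ℝ x y ∩ (USet U σ2 ∩ USet U τ)).Nonempty) ∧
    ¬IsConvexCode C := by
  classical
  obtain ⟨h1, h2, h3, hτc, hPi, hPii, hPiii, ρ1, hρ1, ρ3, hρ3, ht1, ht3, htτ, htρ⟩ := hs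
  have hA : ∀ (d : ℕ) (U : Fin n → Set (EuclideanSpace ℝ (Fin d))), IsRealization C U →
      Convex ℝ (USet U τ) → Convex ℝ (USet U σ1 ∩ USet U τ) →
      Convex ℝ (USet U σ2 ∩ USet U τ) → Convex ℝ (USet U σ3 ∩ USet U τ) →
      ∃ x ∈ USet U σ1 ∩ USet U τ, ∃ y ∈ USet U σ3 ∩ USet U τ,
        (segment ℝ x y ∩ (USet U σ2 ∩ USet U τ)).Nonempty := by
    intro d U hreal hTc _ _ _
    obtain ⟨x, hx⟩ := USet_nonempty_of_mem_complex hreal hPiii.1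
    rw [USet_union] at hx
    obtain ⟨y, hy⟩ := USet_nonempty_of_mem_complex hreal hPiii.2.2
    rw [USet_union] at hy
    have hR1 : USet U σ1 ∩ USet U τ ⊆ USet U ρ1 := by
      rw [← USet_union]; exact USet_subset_of_trunk_subset hreal ht1
    have hR3 : USet U σ3 ∩ USet U τ ⊆ USet U ρ3 := by
      rw [← USet_union]; exact USet_subset_of_trunk_subset hreal ht3
    have hTcover : USet U τ ⊆ USet U ρ1 ∪ USet U ρ3 := by
      intro q hq
      have hc : ptCode U q ∈ trunk C τ := ⟨ptCode_mem_code hreal q, subset_ptCode_iff.2 hq⟩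
      rcases htτ hc with h | h
      · exact Or.inl (subset_ptCode_iff.1 h.2)
      · exact Or.inr (subset_ptCode_iff.1 h.2)
    have hmid : USet U ρ1 ∩ USet U ρ3 ∩ USet U τ ⊆ USet U σ2 := by
      intro q hq
      have hq' : q ∈ USet U (ρ1 ∪ ρ3 ∪ τ) := by
        rw [USet_union, USet_union]; exact hq
      exact USet_subset_of_trunk_subset hreal htρ hq'
    have hseg : segment ℝ x y ⊆ USet U τ := hTc.segment_subset hx.2 hy.2
    have hconn : IsPreconnected (segment ℝ x y) := (convex_segment x y).isPreconnected
    obtain ⟨z, hz⟩ := hconn (USet U ρ1) (USet U ρ3) (USet_isOpen hreal.1) (USet_isOpen hreal.1)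
      (fun q hq => hTcover (hseg hq))
      ⟨x, left_mem_segment ℝ x y, hR1 hx⟩ ⟨y, right_mem_segment ℝ x y, hR3 hy⟩
    exact ⟨x, hx, y, hy, z, hz.1, hmid ⟨hz.2, hseg hz.1⟩, hseg hz.1⟩
  refine ⟨hA, ?_⟩
  rintro ⟨d, U, hreal, hcvx⟩
  have hTc : Convex ℝ (USet U τ) := USet_convex hcvx
  have hcU : ∀ σ : Finset (Fin n), Convex ℝ (USet U σ) := fun _ => USet_convex hcvx
  have hoU : ∀ σ : Finset (Fin n), IsOpen (USet U σ) := fun _ => USet_isOpen hreal.1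
  obtain ⟨x, hx, y, hy, z, hzseg, hz2, hzT⟩ := hA d U hreal hTc
    ((hcU σ1).inter hTc) ((hcU σ2).inter hTc) ((hcU σ3).inter hTc)
  obtain ⟨p, hp⟩ := USet_nonempty_of_mem_complex hreal hPi.1
  rw [USet_union, USet_union] at hp
  have e12 : USet U σ1 ∩ USet U σ2 ⊆ USet U σ3 := by
    intro q hq
    have hq' : q ∈ USet U (σ1 ∪ σ2) := by rw [USet_union]; exact hq
    have h' := USet_subset_of_trunk_subset hreal (le_of_eq hPi.2.1) hq'
    rw [USet_union, USet_union] at h'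
    exact h'.2
  have e13 : USet U σ1 ∩ USet U σ3 ⊆ USet U σ2 := by
    intro q hq
    have hq' : q ∈ USet U (σ1 ∪ σ3) := by rw [USet_union]; exact hq
    have h' := USet_subset_of_trunk_subset hreal (le_of_eq hPi.2.2.1) hq'
    rw [USet_union, USet_union] at h'
    exact h'.1.2
  have e23 : USet U σ2 ∩ USet U σ3 ⊆ USet U σ1 := by
    intro q hq
    have hq' : q ∈ USet U (σ2 ∪ σ3) := by rw [USet_union]; exact hq
    have h' := USet_subset_of_trunk_subset hreal (le_of_eq hPi.2.2.2) hq'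
    rw [USet_union, USet_union] at h'
    exact h'.1.1
  have hquad : USet U σ1 ∩ USet U σ2 ∩ USet U σ3 ∩ USet U τ = ∅ := by
    by_contra h
    apply hPii
    apply mem_complex_of_USet_nonempty hreal
    rw [USet_union, USet_union, USet_union]
    exact Set.nonempty_iff_ne_empty.2 h
  exact wheel_contradiction (hoU σ1) (hoU σ2) (hoU σ3) (hoU τ)
    (hcU σ1) (hcU σ2) (hcU σ3) hTc e12 e13 e23 hquad
    hp.1.1 hp.1.2 hp.2 hx.1 hx.2 hy.1 hy.2 hz2 hzT hzseg
end

section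
/- If (σ1, σ2, σ3, τ) is a sprocket of a code C on n neurons, then the rim τ is not a codeword of C, i.e., τ ∉ C. -/
open NeuralCode

/-- the rim of a sprocket is not a codeword. -/
theorem sprocket_rim_not_codeword {n : ℕ} (C : Set (Finset (Fin n)))
    (σ1 σ2 σ3 τ : Finset (Fin n)) (hs : IsSprocket C σ1 σ2 σ3 τ) : τ ∉ C := by
  intro hτC
  obtain ⟨h1, h2, h3, h4, ⟨hPiΔ, hP12, hP13, hP23⟩, hPii, ⟨hp1, hp2, hp3⟩,
    ρ1, hρ1, ρ3, hρ3, ht1, ht3, htτ, ht2⟩ := hs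
  have hττ : τ ∈ trunk C τ := ⟨hτC, Finset.Subset.refl τ⟩
  apply hPii
  rcases htτ hττ with hτρ1 | hτρ3
  · -- ρ1 ⊆ τ
    obtain ⟨c, hcC, hc⟩ := hp3
    have hcτ : τ ⊆ c := (Finset.union_subset_iff.mp hc).2
    have hcρ3 : ρ3 ⊆ c := (ht3 ⟨hcC, hc⟩).2
    have hcσ2 : σ2 ⊆ c := (ht2 ⟨hcC, Finset.union_subset
      (Finset.union_subset (hτρ1.2.trans hcτ) hcρ3) hcτ⟩).2
    have hc23 : c ∈ trunk C (σ2 ∪ σ3) :=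
      ⟨hcC, Finset.union_subset hcσ2 (Finset.union_subset_iff.mp hc).1⟩
    rw [hP23] at hc23
    exact ⟨c, hcC, Finset.union_subset hc23.2 hcτ⟩
  · -- ρ3 ⊆ τ
    obtain ⟨c, hcC, hc⟩ := hp1
    have hcτ : τ ⊆ c := (Finset.union_subset_iff.mp hc).2
    have hcρ1 : ρ1 ⊆ c := (ht1 ⟨hcC, hc⟩).2
    have hcσ2 : σ2 ⊆ c := (ht2 ⟨hcC, Finset.union_subset
      (Finset.union_subset hcρ1 (hτρ3.2.trans hcτ)) hcτ⟩).2
    have hc12 : c ∈ trunk C (σ1 ∪ σ2) :=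
      ⟨hcC, Finset.union_subset (Finset.union_subset_iff.mp hc).1 hcσ2⟩
    rw [hP12] at hc12
    exact ⟨c, hcC, Finset.union_subset hc12.2 hcτ⟩
end

section
/- If a code C on n neurons has a sprocket, then C has a sprocket whose rim is a max-intersection face of Δ(C): there exist faces σ1, σ2, σ3 and a face τ̃ of Δ(C) equal to the intersection of two or more distinct facets of Δ(C) such that (σ1, σ2, σ3, τ̃) is a sprocket of C. -/
open NeuralCode

lemma trunk_anti' {ι : Type*} (C : Set (Finset ι)) {a b : Finset ι} (h : a ⊆ b) :
    trunk C b ⊆ trunk C a := fun c hc => ⟨hc.1, h.trans hc.2⟩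

lemma mem_complex_mono' {ι : Type*} (C : Set (Finset ι)) {a b : Finset ι} (h : a ⊆ b)
    (hb : b ∈ neuralComplex C) : a ∈ neuralComplex C := by
  obtain ⟨c, hc, hbc⟩ := hb; exact ⟨c, hc, h.trans hbc⟩

lemma exists_facet' {n : ℕ} (C : Set (Finset (Fin n))) {c : Finset (Fin n)} (hc : c ∈ C) :
    ∃ F, IsFacet C F ∧ c ⊆ F := by
  obtain ⟨m, hm, hmax⟩ := Set.Finite.exists_maximalFor id {c' | c' ∈ C ∧ c ⊆ c'}
    (Set.toFinite _) ⟨c, hc, Finset.Subset.refl c⟩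
  exact ⟨m, ⟨hm.1, fun c' hc' hsub =>
    Finset.Subset.antisymm (hmax ⟨hc', hm.2.trans hsub⟩ (Finset.le_iff_subset.mpr hsub)) hsub⟩, hm.2⟩

/-- bubble-up property for sprockets. -/
theorem sprocket_bubbles_up {n : ℕ} (C : Set (Finset (Fin n)))
    (h : ∃ σ1 σ2 σ3 τ : Finset (Fin n), IsSprocket C σ1 σ2 σ3 τ) :
    ∃ σ1 σ2 σ3 τ : Finset (Fin n),
      IsSprocket C σ1 σ2 σ3 τ ∧ IsMaxIntersectionFace C τ := by
  classical
  obtain ⟨σ1, σ2, σ3, τ, h1, h2, h3, hτΔ, hPi, hPii, hPiii, ρ1, hρ1, ρ3, hρ3,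
    ht1, ht3, htτ, htρ⟩ := h
  -- the set of facets containing τ
  set S : Finset (Finset (Fin n)) :=
    Finset.univ.filter (fun F => IsFacet C F ∧ τ ⊆ F) with hS
  have memS : ∀ F, F ∈ S ↔ IsFacet C F ∧ τ ⊆ F := by
    intro F; simp [hS]
  -- every codeword containing τ lies in some member of S
  have key : ∀ c ∈ C, τ ⊆ c → ∃ F ∈ S, c ⊆ F := by
    intro c hc hτc
    obtain ⟨F, hF, hcF⟩ := exists_facet' C hc
    exact ⟨F, (memS F).mpr ⟨hF, hτc.trans hcF⟩, hcF⟩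
  set τ' : Finset (Fin n) := S.inf id with hτ'
  have hττ' : τ ⊆ τ' := Finset.le_inf fun F hF => ((memS F).mp hF).2
  -- each σj ∪ τ' is a face
  have face' : ∀ σ : Finset (Fin n), σ ∪ τ ∈ neuralComplex C →
      ∃ F ∈ S, σ ∪ τ' ⊆ F := by
    intro σ ⟨c, hc, hsub⟩
    obtain ⟨F, hFS, hcF⟩ := key c hc ((Finset.subset_union_right).trans hsub)
    refine ⟨F, hFS, Finset.union_subset
      (((Finset.subset_union_left).trans hsub).trans hcF) (Finset.le_iff_subset.mp (Finset.inf_le hFS))⟩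
  have hS1 : S.Nonempty := by
    obtain ⟨c, hc, hsub⟩ := hτΔ
    obtain ⟨F, hFS, _⟩ := key c hc hsub
    exact ⟨F, hFS⟩
  -- S has at least two elements
  have hcard : 2 ≤ S.card := by
    by_contra hlt
    push_neg at hlt
    obtain ⟨F, hF⟩ := Finset.card_le_one_iff_subset_singleton.mp (Nat.lt_succ_iff.mp hlt)
    have hmem : ∀ G ∈ S, G = F := fun G hG => Finset.mem_singleton.mp (hF hG)
    obtain ⟨hp1, hp2, hp3⟩ := hPiii
    obtain ⟨F1, hF1, hs1⟩ := face' σ1 hp1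
    obtain ⟨F2, hF2, hs2⟩ := face' σ2 hp2
    obtain ⟨F3, hF3, hs3⟩ := face' σ3 hp3
    rw [hmem F1 hF1] at hs1; rw [hmem F2 hF2] at hs2; rw [hmem F3 hF3] at hs3
    have hFS : F ∈ S := hmem F1 hF1 ▸ hF1
    refine hPii ⟨F, ((memS F).mp hFS).1.1, ?_⟩
    have hτF : τ ⊆ F := ((memS F).mp hFS).2
    refine Finset.union_subset (Finset.union_subset (Finset.union_subset ?_ ?_) ?_) hτF
    · exact (Finset.subset_union_left).trans hs1
    · exact (Finset.subset_union_left).trans hs2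
    · exact (Finset.subset_union_left).trans hs3
  -- τ' is a face
  have hτ'Δ : τ' ∈ neuralComplex C := by
    obtain ⟨F, hFS⟩ := hS1
    exact ⟨F, ((memS F).mp hFS).1.1, Finset.le_iff_subset.mp (Finset.inf_le hFS)⟩
  have faceΔ : ∀ σ : Finset (Fin n), σ ∪ τ ∈ neuralComplex C →
      σ ∪ τ' ∈ neuralComplex C := by
    intro σ hσ
    obtain ⟨F, hFS, hsub⟩ := face' σ hσ
    exact ⟨F, ((memS F).mp hFS).1.1, hsub⟩
  obtain ⟨hp1, hp2, hp3⟩ := hPiii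
  refine ⟨σ1, σ2, σ3, τ', ⟨h1, h2, h3, hτ'Δ, hPi, ?_, ⟨faceΔ σ1 hp1, faceΔ σ2 hp2,
      faceΔ σ3 hp3⟩, ρ1, hρ1, ρ3, hρ3, ?_, ?_, ?_, ?_⟩, hτ'Δ,
    S, hcard, fun F hF => ((memS F).mp hF).1, rfl⟩
  · intro hmem
    exact hPii (mem_complex_mono' C (Finset.union_subset_union_right hττ') hmem)
  · exact (trunk_anti' C (Finset.union_subset_union_right hττ')).trans ht1
  · exact (trunk_anti' C (Finset.union_subset_union_right hττ')).trans ht3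
  · exact (trunk_anti' C hττ').trans htτ
  · exact (trunk_anti' C (Finset.union_subset_union_right hττ')).trans htρ
end

section
/- If (σ1, σ2, σ3, τ) is a wire wheel of a code C on n neurons, then τ ∉ C and τ is a max-intersection face of Δ(C), i.e., τ equals the intersection of two or more distinct facets of Δ(C). -/
open NeuralCode

/-- the rim of a wire wheel is a non-codeword and a max-intersection face. -/
theorem wire_wheel_rim {n : ℕ} (C : Set (Finset (Fin n)))
    (σ1 σ2 σ3 τ : Finset (Fin n)) (h : IsWireWheel C σ1 σ2 σ3 τ) :
    τ ∉ C ∧ IsMaxIntersectionFace C τ := by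
  obtain ⟨hσ1, hσ2, hσ3, hτΔ, hPi, hPii, hτC, h3f, htree, v1, v2, v3, hs1, hs2, hs3, hpath⟩ := h
  refine ⟨hτC, ?_⟩
  -- every codeword extends to a facet
  have facet_ext : ∀ c ∈ C, ∃ F, IsFacet C F ∧ c ⊆ F := by
    intro c hc
    obtain ⟨F, hF, hmax⟩ := Set.Finite.exists_maximalFor Finset.card
      {c' | c' ∈ C ∧ c ⊆ c'} (Set.toFinite _) ⟨c, hc, Finset.Subset.refl c⟩
    refine ⟨F, ⟨hF.1, ?_⟩, hF.2⟩
    intro c' hc' hFc'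
    exact (Finset.eq_of_subset_of_card_le hFc'
      (hmax ⟨hc', hF.2.trans hFc'⟩ (Finset.card_le_card hFc'))).symm
  obtain ⟨c1, hc1C, hc1⟩ := v1.2.2
  obtain ⟨F1, hF1, hc1F1⟩ := facet_ext c1 hc1C
  obtain ⟨c3, hc3C, hc3⟩ := v3.2.2
  obtain ⟨F3, hF3, hc3F3⟩ := facet_ext c3 hc3C
  have hτF1 : τ ⊆ F1 := ((Finset.insert_subset_iff.mp hc1).2).trans hc1F1
  have hv1F1 : (v1 : Fin n) ∈ F1 := hc1F1 ((Finset.insert_subset_iff.mp hc1).1)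
  have hτF3 : τ ⊆ F3 := ((Finset.insert_subset_iff.mp hc3).2).trans hc3F3
  have hv3F3 : (v3 : Fin n) ∈ F3 := hc3F3 ((Finset.insert_subset_iff.mp hc3).1)
  have hsub : ∀ (σ : Finset (Fin n)) (v : Fin n), σ \ τ = {v} → σ ⊆ insert v τ := by
    intro σ v hσv x hx
    by_cases hxτ : x ∈ τ
    · exact Finset.mem_insert_of_mem hxτ
    · have : x ∈ σ \ τ := Finset.mem_sdiff.mpr ⟨hx, hxτ⟩
      rw [hσv, Finset.mem_singleton] at this
      exact this ▸ Finset.mem_insert_self _ _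
  have hsub1 := hsub σ1 _ hs1
  have hsub2 := hsub σ2 _ hs2
  have hsub3 := hsub σ3 _ hs3
  -- contradiction machines
  have contra1 : (v2 : Fin n) ∈ F1 → False := by
    intro hv2F1
    have h12 : σ1 ∪ σ2 ⊆ F1 :=
      Finset.union_subset (hsub1.trans (Finset.insert_subset hv1F1 hτF1))
        (hsub2.trans (Finset.insert_subset hv2F1 hτF1))
    have hmem : F1 ∈ trunk C (σ1 ∪ σ2) := ⟨hF1.1, h12⟩
    rw [hPi.2.1] at hmem
    exact hPii ⟨F1, hF1.1, Finset.union_subset hmem.2 hτF1⟩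
  have contra3 : (v2 : Fin n) ∈ F3 → False := by
    intro hv2F3
    have h23 : σ2 ∪ σ3 ⊆ F3 :=
      Finset.union_subset (hsub2.trans (Finset.insert_subset hv2F3 hτF3))
        (hsub3.trans (Finset.insert_subset hv3F3 hτF3))
    have hmem : F3 ∈ trunk C (σ2 ∪ σ3) := ⟨hF3.1, h23⟩
    rw [hPi.2.2.2] at hmem
    exact hPii ⟨F3, hF3.1, Finset.union_subset hmem.2 hτF3⟩
  -- adjacency builder
  have adjmk : ∀ (a b : {i : Fin n // i ∉ τ ∧ insert i τ ∈ neuralComplex C})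
      (F : Finset (Fin n)), F ∈ C → τ ⊆ F → (a : Fin n) ∈ F → (b : Fin n) ∈ F → a ≠ b →
      (linkGraph C τ).Adj a b := by
    intro a b F hFC hτF haF hbF hab
    show a ≠ b ∧ τ ∪ {(a : Fin n), (b : Fin n)} ∈ neuralComplex C
    refine ⟨hab, ⟨F, hFC, ?_⟩⟩
    exact Finset.union_subset hτF (Finset.insert_subset haF (Finset.singleton_subset_iff.mpr hbF))
  -- the key claim
  have hinter : F1 ∩ F3 = τ := by
    apply Finset.Subset.antisymm
    · intro u hu
      by_contra huτ
      have huF1 : u ∈ F1 := (Finset.mem_inter.mp hu).1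
      have huF3 : u ∈ F3 := (Finset.mem_inter.mp hu).2
      have huΔ : insert u τ ∈ neuralComplex C :=
        ⟨F1, hF1.1, Finset.insert_subset huF1 hτF1⟩
      set uu : {i : Fin n // i ∉ τ ∧ insert i τ ∈ neuralComplex C} := ⟨u, huτ, huΔ⟩ with huu
      have hv2or : (v2 : Fin n) ∈ F1 ∨ (v2 : Fin n) ∈ F3 := by
        by_cases h13 : v1 = v3
        · subst h13
          have := hpath SimpleGraph.Walk.nil (SimpleGraph.Walk.IsPath.nil)
          simp only [SimpleGraph.Walk.support_nil, List.mem_singleton] at this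
          exact Or.inl (this ▸ hv1F1)
        · by_cases hu1 : u = (v1 : Fin n)
          · have adj : (linkGraph C τ).Adj v1 v3 :=
              adjmk v1 v3 F3 hF3.1 hτF3 (hu1 ▸ huF3) hv3F3 h13
            have hp := hpath (SimpleGraph.Walk.cons adj SimpleGraph.Walk.nil) (by
              rw [SimpleGraph.Walk.isPath_def]
              simp [h13])
            simp only [SimpleGraph.Walk.support_cons, SimpleGraph.Walk.support_nil,
              List.mem_cons, List.mem_singleton] at hp
            rcases hp with h | h | h
            · exact Or.inl (by rw [h]; exact hv1F1)
            · exact Or.inr (by rw [h]; exact hv3F3)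
            · exact absurd h (by simp)
          · by_cases hu3 : u = (v3 : Fin n)
            · have adj : (linkGraph C τ).Adj v1 v3 :=
                adjmk v1 v3 F1 hF1.1 hτF1 hv1F1 (hu3 ▸ huF1) h13
              have hp := hpath (SimpleGraph.Walk.cons adj SimpleGraph.Walk.nil) (by
                rw [SimpleGraph.Walk.isPath_def]
                simp [h13])
              simp only [SimpleGraph.Walk.support_cons, SimpleGraph.Walk.support_nil,
                List.mem_cons, List.mem_singleton] at hp
              rcases hp with h | h | h
              · exact Or.inl (by rw [h]; exact hv1F1)
              · exact Or.inr (by rw [h]; exact hv3F3)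
              · exact absurd h (by simp)
            · have hne1 : v1 ≠ uu := fun he => hu1 (by rw [he])
              have hne3 : uu ≠ v3 := fun he => hu3 (by rw [← he])
              have adj1 : (linkGraph C τ).Adj v1 uu :=
                adjmk v1 uu F1 hF1.1 hτF1 hv1F1 huF1 hne1
              have adj2 : (linkGraph C τ).Adj uu v3 :=
                adjmk uu v3 F3 hF3.1 hτF3 huF3 hv3F3 hne3
              have hp := hpath
                (SimpleGraph.Walk.cons adj1 (SimpleGraph.Walk.cons adj2 SimpleGraph.Walk.nil))
                (by
                  rw [SimpleGraph.Walk.isPath_def]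
                  simp [hne1, hne3, h13])
              simp only [SimpleGraph.Walk.support_cons, SimpleGraph.Walk.support_nil,
                List.mem_cons, List.mem_singleton] at hp
              rcases hp with h | h | h | h
              · exact Or.inl (by rw [h]; exact hv1F1)
              · exact Or.inl (by rw [h]; exact huF1)
              · exact Or.inr (by rw [h]; exact hv3F3)
              · exact absurd h (by simp)
      rcases hv2or with h | h
      · exact contra1 h
      · exact contra3 h
    · exact Finset.subset_inter hτF1 hτF3
  have hne : F1 ≠ F3 := by
    intro he
    exact v1.2.1 (hinter ▸ Finset.mem_inter.mpr ⟨hv1F1, he ▸ hv1F1⟩)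
  refine ⟨hτΔ, {F1, F3}, ?_, ?_, ?_⟩
  · rw [Finset.card_pair hne]
  · intro F hF
    rcases Finset.mem_insert.mp hF with h | h
    · exact h ▸ hF1
    · exact (Finset.mem_singleton.mp h) ▸ hF3
  · rw [Finset.inf_insert, Finset.inf_singleton, id, id, Finset.inf_eq_inter, hinter]
end
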